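/- Let k ≥ 3 be an integer and let H be a function holomorphic on the strip |Re(s)| < 3, bounded there, even (H(-s) = H(s)), with H(0) = 1. Define, for ξ > 0, 𝒱(ξ) = (1/2πi) ∫_{Re(s)=1} H(s)⁴ · (Γ(s + k/2)⁴ / Γ(k/2)⁴) · ξ^{-s} ds/s (the integral over the vertical line Re(s) = 1). Then for every A with 0 < A < 1 there exists a constant C > 0 such that |𝒱(x) - 1| ≤ C x^{A} for all x with 0 < x ≤ 1. -/

import Mathlib

open Complex MeasureTheory Set Filter Real Topology
open scoped Interval


lemma norm_Gamma_le_Gamma_re {s : ℂ} (hs : 0 < s.re) :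
    ‖Complex.Gamma s‖ ≤ Real.Gamma s.re := by
  rw [Complex.Gamma_eq_integral hs, Real.Gamma_eq_integral hs, Complex.GammaIntegral]
  refine (norm_integral_le_integral_norm _).trans (le_of_eq ?_)
  refine setIntegral_congr_fun measurableSet_Ioi fun x hx => ?_
  rw [norm_mul, Complex.norm_real, Complex.norm_cpow_eq_rpow_re_of_pos hx]
  simp [_root_.abs_of_nonneg (Real.exp_pos (-x)).le]

-- decay on vertical lines
lemma norm_Gamma_vert {c : ℝ} (hc : 0 < c) (t : ℝ) :
    ‖Complex.Gamma ((c : ℂ) + t * I)‖ ≤ Real.Gamma (c + 1) / ‖(c:ℂ) + t * I‖ := by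
  have hne : (c : ℂ) + t * I ≠ 0 := by
    intro h
    have := congrArg Complex.re h
    simp at this
    simp [this] at hc
  have h1 : Complex.Gamma ((c:ℂ) + t*I + 1) = ((c:ℂ)+t*I) * Complex.Gamma ((c:ℂ)+t*I) :=
    Complex.Gamma_add_one _ hne
  have h2 : ‖Complex.Gamma ((c:ℂ) + t*I + 1)‖ ≤ Real.Gamma (c + 1) := by
    have := norm_Gamma_le_Gamma_re (s := (c:ℂ) + t*I + 1) (by simp [hc]; positivity)
    simpa using this
  rw [h1, norm_mul] at h2
  have habs : 0 < ‖(c:ℂ) + t*I‖ := by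
    exact norm_pos_iff.mpr hne
  rw [le_div_iff₀ habs]
  calc ‖Complex.Gamma ((c:ℂ)+t*I)‖ * ‖(c:ℂ)+t*I‖
      = ‖(c:ℂ)+t*I‖ * ‖Complex.Gamma ((c:ℂ)+t*I)‖ := by ring
    _ ≤ Real.Gamma (c+1) := h2

lemma alg_aux (a g σp mp xp t2 : ℝ) (hg : g ≠ 0) (hσ : σp ≠ 0) (hm : mp ≠ 0) (ht : t2 ≠ 0) :
    a * (1 / (mp * t2)) / g * xp / σp = a / g / (σp * mp) * xp * t2⁻¹ := by
  ring

lemma inv_line_decomp {σ : ℝ} (hσ : σ ≠ 0) (t : ℝ) :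
    ((σ:ℂ) + t*I)⁻¹ = ((σ/(σ^2+t^2) : ℝ):ℂ) - ((t/(σ^2+t^2) : ℝ):ℂ)*I := by
  have hd : (σ^2 + t^2 : ℝ) ≠ 0 := by positivity
  have hdC : ((σ:ℂ)^2 + (t:ℂ)^2) ≠ 0 := by
    have : ((σ:ℂ)^2 + (t:ℂ)^2) = ((σ^2+t^2 : ℝ) : ℂ) := by push_cast; ring
    rw [this]; exact_mod_cast hd
  have key : ((σ:ℂ) + t*I) * (((σ/(σ^2+t^2) : ℝ):ℂ) - ((t/(σ^2+t^2) : ℝ):ℂ)*I) = 1 := by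
    push_cast
    field_simp
    linear_combination (-(t:ℂ)^2) * Complex.I_sq
  exact inv_eq_of_mul_eq_one_right key

lemma integral_odd_part {σ : ℝ} (hσ : σ ≠ 0) (T : ℝ) :
    ∫ t in (-T)..T, t/(σ^2+t^2) = 0 := by
  have hder : ∀ t : ℝ, HasDerivAt (fun t : ℝ => Real.log (σ^2+t^2) / 2) (t/(σ^2+t^2)) t := by
    intro t
    have h1 : HasDerivAt (fun t : ℝ => σ^2+t^2) (2*t) t := by
      simpa using (hasDerivAt_pow 2 t).const_add (σ^2)
    have h2 := ((Real.hasDerivAt_log (by positivity : (σ^2+t^2 : ℝ) ≠ 0)).comp t h1).div_const 2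
    exact h2.congr_deriv (by field_simp)
  have hcont : Continuous fun t : ℝ => t/(σ^2+t^2) := by
    apply Continuous.div continuous_id (by continuity)
    intro t; positivity
  rw [intervalIntegral.integral_eq_sub_of_hasDerivAt (fun t _ => hder t)
    (hcont.intervalIntegrable _ _)]
  simp [neg_pow]

lemma integral_even_part {σ : ℝ} (hσ : 0 < σ) (T : ℝ) :
    ∫ t in (-T)..T, σ/(σ^2+t^2) = 2 * Real.arctan (T/σ) := by
  have hder : ∀ t : ℝ, HasDerivAt (fun t : ℝ => Real.arctan (t/σ)) (σ/(σ^2+t^2)) t := by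
    intro t
    have h2 := (Real.hasDerivAt_arctan (t/σ)).comp t ((hasDerivAt_id t).div_const σ)
    exact h2.congr_deriv (by field_simp)
  have hcont : Continuous fun t : ℝ => σ/(σ^2+t^2) := by
    apply Continuous.div continuous_const (by continuity)
    intro t; positivity
  rw [intervalIntegral.integral_eq_sub_of_hasDerivAt (fun t _ => hder t)
    (hcont.intervalIntegrable _ _)]
  rw [neg_div, Real.arctan_neg]
  ring

lemma tendsto_inv_line {σ : ℝ} (hσ : 0 < σ) :
    Filter.Tendsto (fun T : ℝ => ∫ t in (-T)..T, ((σ:ℂ) + t*I)⁻¹)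
      Filter.atTop (𝓝 (Real.pi : ℂ)) := by
  have hcont1 : Continuous fun t : ℝ => (σ/(σ^2+t^2) : ℝ) := by
    apply Continuous.div continuous_const (by continuity)
    intro t; positivity
  have hcont2 : Continuous fun t : ℝ => (t/(σ^2+t^2) : ℝ) := by
    apply Continuous.div continuous_id (by continuity)
    intro t; positivity
  have heq : ∀ T : ℝ, ∫ t in (-T)..T, ((σ:ℂ)+t*I)⁻¹ = ((2 * Real.arctan (T/σ) : ℝ) : ℂ) := by
    intro T
    rw [intervalIntegral.integral_congr (g := fun t : ℝ =>
        ((σ/(σ^2+t^2) : ℝ):ℂ) - ((t/(σ^2+t^2) : ℝ):ℂ)*I)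
        (fun t _ => inv_line_decomp hσ.ne' t)]
    have hc1 : Continuous fun t : ℝ => ((σ/(σ^2+t^2) : ℝ):ℂ) :=
      Complex.continuous_ofReal.comp hcont1
    have hc2 : Continuous fun t : ℝ => ((t/(σ^2+t^2) : ℝ):ℂ) * I :=
      (Complex.continuous_ofReal.comp hcont2).mul continuous_const
    rw [intervalIntegral.integral_sub (hc1.intervalIntegrable _ _)
        (hc2.intervalIntegrable _ _), intervalIntegral.integral_mul_const]
    rw [intervalIntegral.integral_ofReal, intervalIntegral.integral_ofReal,
      integral_even_part hσ, integral_odd_part hσ.ne']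
    simp
  simp_rw [heq]
  have harctan : Filter.Tendsto (fun T : ℝ => Real.arctan (T/σ)) Filter.atTop (𝓝 (Real.pi/2)) := by
    have := Real.tendsto_arctan_atTop.mono_right nhdsWithin_le_nhds
    exact this.comp (Filter.tendsto_id.atTop_div_const hσ)
  have : Filter.Tendsto (fun T : ℝ => (2 * Real.arctan (T/σ) : ℝ)) Filter.atTop (𝓝 Real.pi) := by
    have h2 := harctan.const_mul (2:ℝ)
    have : 2 * (Real.pi/2) = Real.pi := by ring
    rwa [this] at h2
  exact (Complex.continuous_ofReal.tendsto _).comp this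

lemma tendsto_inv_line_neg {σ : ℝ} (hσ : σ < 0) :
    Filter.Tendsto (fun T : ℝ => ∫ t in (-T)..T, ((σ:ℂ) + t*I)⁻¹)
      Filter.atTop (𝓝 (-(Real.pi : ℂ))) := by
  have key : ∀ T : ℝ, ∫ t in (-T)..T, ((σ:ℂ) + t*I)⁻¹
      = - ∫ t in (-T)..T, (((-σ : ℝ):ℂ) + t*I)⁻¹ := by
    intro T
    have h1 : ∀ t : ℝ, ((σ:ℂ) + t*I)⁻¹ = -((((-σ : ℝ):ℂ) + (-t : ℝ)*I)⁻¹) := by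
      intro t
      rw [← inv_neg]
      push_cast
      ring_nf
    calc ∫ t in (-T)..T, ((σ:ℂ) + t*I)⁻¹
        = ∫ t in (-T)..T, -((((-σ : ℝ):ℂ) + (-t : ℝ)*I)⁻¹) :=
          intervalIntegral.integral_congr (fun t _ => h1 t)
      _ = - ∫ t in (-T)..T, (((-σ : ℝ):ℂ) + (-t : ℝ)*I)⁻¹ := intervalIntegral.integral_neg
      _ = - ∫ t in (-T)..T, (((-σ : ℝ):ℂ) + t*I)⁻¹ := by
          congr 1
          have := intervalIntegral.integral_comp_neg (a := -T) (b := T)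
            (f := fun t : ℝ => (((-σ : ℝ):ℂ) + t*I)⁻¹)
          simpa using this
  simp_rw [key]
  exact (tendsto_inv_line (by linarith : (0:ℝ) < -σ)).neg

noncomputable section
namespace Vnear

def F (k : ℕ) (H : ℂ → ℂ) : ℂ → ℂ := fun s =>
  H s ^ 4 * (Complex.Gamma (s + (k:ℂ)/2) ^ 4 / Complex.Gamma ((k:ℂ)/2) ^ 4)

def Phi (k : ℕ) (H : ℂ → ℂ) (x : ℝ) : ℂ → ℂ := fun s => F k H s * (x:ℂ) ^ (-s)

def G (k : ℕ) (H : ℂ → ℂ) (x : ℝ) : ℂ → ℂ := fun s => Phi k H x s / s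

def U : Set ℂ := {s : ℂ | -1 < s.re ∧ s.re < 2}

lemma isOpen_U : IsOpen U :=
  (isOpen_lt continuous_const continuous_re).inter (isOpen_lt continuous_re continuous_const)

lemma isOpen_strip : IsOpen {s : ℂ | |s.re| < 3} :=
  isOpen_lt (continuous_abs.comp continuous_re) continuous_const

lemma U_sub_strip : U ⊆ {s : ℂ | |s.re| < 3} := by
  rintro s ⟨h1, h2⟩
  simp only [mem_setOf_eq, abs_lt]
  constructor <;> linarith

lemma kappa_cast (k : ℕ) : (k:ℂ)/2 = (((k:ℝ)/2 : ℝ) : ℂ) := by push_cast; ring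

lemma Gamma_kappa (k : ℕ) :
    Complex.Gamma ((k:ℂ)/2) = ((Real.Gamma ((k:ℝ)/2) : ℝ) : ℂ) := by
  rw [kappa_cast, Complex.Gamma_ofReal]

lemma kappa_half_le (k : ℕ) (hk : 3 ≤ k) : (3:ℝ)/2 ≤ (k:ℝ)/2 := by
  have : (3:ℝ) ≤ (k:ℝ) := by exact_mod_cast hk
  linarith

lemma gk_pos (k : ℕ) (hk : 3 ≤ k) : 0 < Real.Gamma ((k:ℝ)/2) :=
  Real.Gamma_pos_of_pos (by have := kappa_half_le k hk; linarith)

lemma shift_cast (k : ℕ) (σ t : ℝ) :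
    ((σ:ℂ) + t*I) + (k:ℂ)/2 = ((σ + (k:ℝ)/2 : ℝ) : ℂ) + t*I := by
  push_cast; ring

lemma Phi_diff (k : ℕ) (hk : 3 ≤ k) (H : ℂ → ℂ)
    (hol : DifferentiableOn ℂ H {s : ℂ | |s.re| < 3}) (x : ℝ) (hx : 0 < x) :
    ∀ s ∈ U, DifferentiableAt ℂ (Phi k H x) s := by
  intro s hs
  have hH : DifferentiableAt ℂ H s :=
    (hol.differentiableAt (isOpen_strip.mem_nhds (U_sub_strip hs)))
  have hΓ : DifferentiableAt ℂ (fun s => Complex.Gamma (s + (k:ℂ)/2)) s := by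
    have h1 : DifferentiableAt ℂ Complex.Gamma (s + (k:ℂ)/2) := by
      apply Complex.differentiableAt_Gamma
      intro m h
      have := congrArg Complex.re h
      simp only [add_re, neg_re, natCast_re] at this
      have hre : ((k:ℂ)/2).re = (k:ℝ)/2 := by rw [kappa_cast]; simp
      rw [hre] at this
      have h32 := kappa_half_le k hk
      have hs1 := hs.1
      have : s.re + (k:ℝ)/2 = -(m:ℝ) := this
      have hm : (0:ℝ) ≤ (m:ℝ) := Nat.cast_nonneg m
      linarith
    exact h1.comp s (differentiableAt_id.add_const _)
  have hxc : (x:ℂ) ≠ 0 := ofReal_ne_zero.mpr hx.ne'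
  have hcp : DifferentiableAt ℂ (fun s : ℂ => (x:ℂ) ^ (-s)) s :=
    differentiableAt_id.neg.const_cpow (Or.inl hxc)
  exact (((hH.pow 4).mul (((hΓ.pow 4)).div_const _))).mul hcp

lemma Phi_zero (k : ℕ) (hk : 3 ≤ k) (H : ℂ → ℂ) (h0 : H 0 = 1) (x : ℝ) (hx : 0 < x) :
    Phi k H x 0 = 1 := by
  have hgk := gk_pos k hk
  have hΓne : Complex.Gamma ((k:ℂ)/2) ≠ 0 := by
    rw [Gamma_kappa]; exact_mod_cast hgk.ne'
  simp only [Phi, F, h0, zero_add, neg_zero, cpow_zero, mul_one, one_pow, one_mul]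
  exact div_self (pow_ne_zero _ hΓne)

-- the key pointwise bound on vertical lines
lemma normG_bound (k : ℕ) (hk : 3 ≤ k) (H : ℂ → ℂ) (M : ℝ)
    (hM : ∀ s : ℂ, |s.re| < 3 → ‖H s‖ ≤ M) (hM0 : 0 ≤ M)
    (x : ℝ) (hx : 0 < x) {σ : ℝ} (hσ0 : σ ≠ 0) (hσ1 : -1 < σ) (hσ2 : σ < 2) (t : ℝ) :
    ‖G k H x ((σ:ℂ) + t*I)‖ ≤
      (M^4 * Real.Gamma (σ + (k:ℝ)/2 + 1)^4 / Real.Gamma ((k:ℝ)/2)^4 /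
        (|σ| * (min 1 (σ + (k:ℝ)/2))^4)) * x ^ (-σ) * (1+t^2)⁻¹ := by
  set c : ℝ := σ + (k:ℝ)/2 with hc_def
  have h32 := kappa_half_le k hk
  have hc : 0 < c := by simp only [hc_def]; linarith
  set m : ℝ := min 1 c with hm_def
  have hm : 0 < m := lt_min one_pos hc
  have hm1 : m ≤ 1 := min_le_left _ _
  have hmc : m ≤ c := min_le_right _ _
  set s : ℂ := (σ:ℂ) + t*I with hs_def
  have hs_re : s.re = σ := by simp [hs_def]
  have hs_ne : s ≠ 0 := by
    intro h; apply hσ0; have := congrArg Complex.re h; simpa [hs_re] using this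
  have habs_s : |σ| ≤ ‖s‖ := by
    have := Complex.abs_re_le_norm s; rw [hs_re] at this
    simpa using this
  have hgk := gk_pos k hk
  have habs2 : (‖(c:ℂ) + t*I‖)^2 = c^2 + t^2 := by
    rw [Complex.sq_norm, Complex.normSq_add_mul_I]
  have hΓ : ‖Complex.Gamma (s + (k:ℂ)/2)‖ ≤
      Real.Gamma (c+1) / ‖(c:ℂ) + t*I‖ := by
    rw [hs_def, shift_cast]
    exact norm_Gamma_vert hc t
  have habspos : 0 < ‖(c:ℂ) + t*I‖ := by
    have h : ((c:ℂ) + t*I) ≠ 0 := by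
      intro h; have := congrArg Complex.re h; simp at this; simp [this] at hc
    exact norm_pos_iff.mpr h
  have hΓpos : 0 < Real.Gamma (c+1) := Real.Gamma_pos_of_pos (by linarith)
  have hcpow : ‖(x:ℂ) ^ (-s)‖ = x ^ (-σ) := by
    rw [Complex.norm_cpow_eq_rpow_re_of_pos hx]
    simp [hs_re]
  have hm2c : m^2 ≤ c^2 := by nlinarith
  have hm21 : m^2 ≤ 1 := by nlinarith
  have hq : m^4 * (1+t^2) ≤ (c^2+t^2)^2 := by
    have h1 : m^2*(1+t^2) ≤ c^2+t^2 := by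
      nlinarith [mul_le_mul_of_nonneg_right hm21 (sq_nonneg t)]
    have h2 : m^4*(1+t^2) ≤ (m^2*(1+t^2))^2 := by
      nlinarith [mul_nonneg (mul_nonneg (pow_nonneg hm.le 4)
        (by positivity : (0:ℝ) ≤ 1+t^2)) (sq_nonneg t)]
    calc m^4*(1+t^2) ≤ (m^2*(1+t^2))^2 := h2
      _ ≤ (c^2+t^2)^2 := by
          apply pow_le_pow_left₀ (by positivity) h1
  have hΓ4 : ‖Complex.Gamma (s + (k:ℂ)/2)‖^4 ≤ Real.Gamma (c+1)^4 / (c^2+t^2)^2 := by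
    calc ‖Complex.Gamma (s + (k:ℂ)/2)‖^4
        ≤ (Real.Gamma (c+1) / ‖(c:ℂ) + t*I‖)^4 := by
          apply pow_le_pow_left₀ (norm_nonneg _) hΓ
      _ = Real.Gamma (c+1)^4 / (c^2+t^2)^2 := by
          rw [div_pow, ← habs2]; ring
  have hnormPhi : ‖Phi k H x s‖ ≤ M^4 * (Real.Gamma (c+1)^4 / (c^2+t^2)^2) /
      Real.Gamma ((k:ℝ)/2)^4 * x ^ (-σ) := by
    have hH : ‖H s‖ ≤ M := hM s (by rw [hs_re, abs_lt]; constructor <;> linarith)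
    have hnorm : ‖Phi k H x s‖ = ‖H s‖^4 * (‖Complex.Gamma (s + (k:ℂ)/2)‖^4 /
        Real.Gamma ((k:ℝ)/2)^4) * ‖(x:ℂ) ^ (-s)‖ := by
      simp only [Phi, F]
      rw [norm_mul, norm_mul, norm_pow, norm_div, norm_pow, norm_pow]
      congr 3
      rw [Gamma_kappa, Complex.norm_real, Real.norm_eq_abs, abs_of_pos hgk]
    rw [hnorm, hcpow]
    have hxpow : (0:ℝ) ≤ x ^ (-σ) := (Real.rpow_pos_of_pos hx _).le
    have step1 : ‖H s‖^4 ≤ M^4 := pow_le_pow_left₀ (norm_nonneg _) hH 4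
    have step2 : ‖Complex.Gamma (s + (k:ℂ)/2)‖^4 / Real.Gamma ((k:ℝ)/2)^4 ≤
        (Real.Gamma (c+1)^4 / (c^2+t^2)^2) / Real.Gamma ((k:ℝ)/2)^4 :=
      div_le_div_of_nonneg_right hΓ4 (by positivity) |>.trans_eq rfl
    calc ‖H s‖^4 * (‖Complex.Gamma (s + (k:ℂ)/2)‖^4 / Real.Gamma ((k:ℝ)/2)^4) * x ^ (-σ)
        ≤ M^4 * ((Real.Gamma (c+1)^4 / (c^2+t^2)^2) / Real.Gamma ((k:ℝ)/2)^4) * x ^ (-σ) := by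
          apply mul_le_mul_of_nonneg_right _ hxpow
          exact mul_le_mul step1 step2 (by positivity) (by positivity)
      _ = M^4 * (Real.Gamma (c+1)^4 / (c^2+t^2)^2) / Real.Gamma ((k:ℝ)/2)^4 * x ^ (-σ) := by
          ring
  have habs_pos : (0:ℝ) < |σ| := abs_pos.mpr hσ0
  have hgk4 : Real.Gamma ((k:ℝ)/2)^4 ≠ 0 := by positivity
  have hm4 : (m:ℝ)^4 ≠ 0 := by positivity
  have ht2 : (1+t^2 : ℝ) ≠ 0 := by positivity
  have hxp : x ^ (-σ) ≠ 0 := (Real.rpow_pos_of_pos hx _).ne'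
  calc ‖G k H x s‖ = ‖Phi k H x s‖ / ‖s‖ := by simp only [G, norm_div]
    _ ≤ (M^4 * (Real.Gamma (c+1)^4 / (c^2+t^2)^2) / Real.Gamma ((k:ℝ)/2)^4 * x ^ (-σ)) / |σ| :=
        div_le_div₀ (by positivity) hnormPhi habs_pos habs_s
    _ ≤ (M^4 * (Real.Gamma (c+1)^4 / (m^4 * (1+t^2))) / Real.Gamma ((k:ℝ)/2)^4 * x ^ (-σ)) / |σ| := by
        have hinner : Real.Gamma (c+1)^4 / (c^2+t^2)^2 ≤ Real.Gamma (c+1)^4 / (m^4*(1+t^2)) :=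
          div_le_div_of_nonneg_left (by positivity) (by positivity) hq
        have hxpow : (0:ℝ) ≤ x ^ (-σ) := (Real.rpow_pos_of_pos hx _).le
        apply div_le_div_of_nonneg_right _ habs_pos.le
        apply mul_le_mul_of_nonneg_right _ hxpow
        apply div_le_div_of_nonneg_right _ (by positivity : (0:ℝ) ≤ Real.Gamma ((k:ℝ)/2)^4)
        exact mul_le_mul_of_nonneg_left hinner (by positivity)
    _ = (M^4 * Real.Gamma (c+1)^4 / Real.Gamma ((k:ℝ)/2)^4 / (|σ| * m^4)) * x ^ (-σ) * (1+t^2)⁻¹ := by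
        have halg := alg_aux (M^4 * Real.Gamma (c+1)^4) (Real.Gamma ((k:ℝ)/2)^4) |σ| (m^4)
          (x ^ (-σ)) (1+t^2) hgk4 (abs_ne_zero.mpr hσ0) hm4 ht2
        calc M^4 * (Real.Gamma (c+1)^4 / (m^4 * (1+t^2))) / Real.Gamma ((k:ℝ)/2)^4 * x ^ (-σ) / |σ|
            = (M^4 * Real.Gamma (c+1)^4) * (1 / (m^4 * (1+t^2))) / Real.Gamma ((k:ℝ)/2)^4 * x ^ (-σ) / |σ| := by
              ring
          _ = (M^4 * Real.Gamma (c+1)^4) / Real.Gamma ((k:ℝ)/2)^4 / (|σ| * m^4) * x ^ (-σ) * (1+t^2)⁻¹ := halg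

lemma line_mem_U {σ : ℝ} (hσ1 : -1 < σ) (hσ2 : σ < 2) (t : ℝ) : ((σ:ℂ) + t*I) ∈ U := by
  constructor <;> simp [hσ1, hσ2]

lemma line_ne_zero {σ : ℝ} (hσ0 : σ ≠ 0) (t : ℝ) : ((σ:ℂ) + t*I) ≠ 0 := by
  intro h; apply hσ0
  have := congrArg Complex.re h
  simpa using this

lemma contG (k : ℕ) (hk : 3 ≤ k) (H : ℂ → ℂ)
    (hol : DifferentiableOn ℂ H {s : ℂ | |s.re| < 3}) (x : ℝ) (hx : 0 < x)
    {σ : ℝ} (hσ0 : σ ≠ 0) (hσ1 : -1 < σ) (hσ2 : σ < 2) :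
    Continuous fun t : ℝ => G k H x ((σ:ℂ) + t*I) := by
  rw [continuous_iff_continuousAt]
  intro t
  have hline : ContinuousAt (fun t : ℝ => (σ:ℂ) + t*I) t := by
    apply Continuous.continuousAt; continuity
  have hPhi : ContinuousAt (Phi k H x) ((σ:ℂ) + t*I) :=
    (Phi_diff k hk H hol x hx _ (line_mem_U hσ1 hσ2 t)).continuousAt
  have h1 : ContinuousAt (fun t : ℝ => Phi k H x ((σ:ℂ)+t*I)) t :=
    ContinuousAt.comp (x := t) (g := Phi k H x) (f := fun t : ℝ => (σ:ℂ)+t*I) hPhi hline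
  exact ContinuousAt.div h1 hline (line_ne_zero hσ0 t)

lemma integrableG (k : ℕ) (hk : 3 ≤ k) (H : ℂ → ℂ)
    (hol : DifferentiableOn ℂ H {s : ℂ | |s.re| < 3}) (M : ℝ)
    (hM : ∀ s : ℂ, |s.re| < 3 → ‖H s‖ ≤ M) (hM0 : 0 ≤ M)
    (x : ℝ) (hx : 0 < x) {σ : ℝ} (hσ0 : σ ≠ 0) (hσ1 : -1 < σ) (hσ2 : σ < 2) :
    Integrable (fun t : ℝ => G k H x ((σ:ℂ) + t*I)) := by
  set K : ℝ := (M^4 * Real.Gamma (σ + (k:ℝ)/2 + 1)^4 / Real.Gamma ((k:ℝ)/2)^4 /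
      (|σ| * (min 1 (σ + (k:ℝ)/2))^4)) * x ^ (-σ) with hK
  apply Integrable.mono' (g := fun t : ℝ => K * (1+t^2)⁻¹)
    (integrable_inv_one_add_sq.const_mul K)
    ((contG k hk H hol x hx hσ0 hσ1 hσ2).aestronglyMeasurable)
  refine ae_of_all _ fun t => ?_
  have := normG_bound k hk H M hM hM0 x hx hσ0 hσ1 hσ2 t
  calc ‖G k H x ((σ:ℂ) + t*I)‖ ≤ (M^4 * Real.Gamma (σ + (k:ℝ)/2 + 1)^4 /
        Real.Gamma ((k:ℝ)/2)^4 / (|σ| * (min 1 (σ + (k:ℝ)/2))^4)) * x ^ (-σ) * (1+t^2)⁻¹ := this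
    _ = K * (1+t^2)⁻¹ := by rw [hK]

lemma contour_shift (k : ℕ) (hk : 3 ≤ k) (H : ℂ → ℂ)
    (hol : DifferentiableOn ℂ H {s : ℂ | |s.re| < 3}) (M : ℝ)
    (hM : ∀ s : ℂ, |s.re| < 3 → ‖H s‖ ≤ M) (h0 : H 0 = 1)
    (x : ℝ) (hx0 : 0 < x) (hx1 : x ≤ 1)
    {σ : ℝ} (hσ1 : -1 < σ) (hσ0 : σ < 0) :
    ∫ t : ℝ, G k H x (((1:ℝ):ℂ) + t*I) =
      (∫ t : ℝ, G k H x ((σ:ℂ) + t*I)) + 2*(Real.pi:ℂ) := by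
  have hσne : σ ≠ 0 := hσ0.ne
  have hσ2 : σ < 2 := by linarith
  have hM1 : (1:ℝ) ≤ M := by
    have := hM 0 (by norm_num)
    simpa [h0] using this
  have hM0 : (0:ℝ) ≤ M := by linarith
  have h32 := kappa_half_le k hk
  have hgk := gk_pos k hk
  have h0U : (0:ℂ) ∈ U := by constructor <;> norm_num
  have hPhidiff := Phi_diff k hk H hol x hx0
  obtain ⟨d, hd⟩ : ∃ d, HasDerivAt (Phi k H x) d 0 := ⟨_, (hPhidiff 0 h0U).hasDerivAt⟩
  set g : ℂ → ℂ := fun s => if s = 0 then d else (Phi k H x s - 1)/s with hgdef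
  have hgne : ∀ s : ℂ, s ≠ 0 → g s = (Phi k H x s - 1)/s := fun s hs => if_neg hs
  have hgG : ∀ s : ℂ, s ≠ 0 → g s = G k H x s - s⁻¹ := by
    intro s hs
    rw [hgne s hs, G, sub_div, one_div]
  have hgdiff : ∀ s ∈ U \ {0}, DifferentiableAt ℂ g s := by
    rintro s ⟨hsU, hs0⟩
    have hs0' : s ≠ 0 := hs0
    have heq : (fun w => (Phi k H x w - 1)/w) =ᶠ[𝓝 s] g := by
      filter_upwards [isOpen_ne.mem_nhds hs0'] with w hw
      exact (hgne w hw).symm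
    have hdd : DifferentiableAt ℂ (fun w => (Phi k H x w - 1)/w) s :=
      ((hPhidiff s hsU).sub_const 1).div differentiableAt_id hs0'
    exact hdd.congr_of_eventuallyEq heq.symm
  have hg0 : g 0 = d := if_pos rfl
  have hgcont0 : ContinuousAt g 0 := by
    have hslope : Tendsto (slope (Phi k H x) 0) (𝓝[≠] 0) (𝓝 d) :=
      hasDerivAt_iff_tendsto_slope.mp hd
    have h1 : Tendsto g (𝓝[≠] 0) (𝓝 d) := by
      apply hslope.congr'
      filter_upwards [self_mem_nhdsWithin] with w hw
      have hw' : w ≠ 0 := hw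
      rw [hgne w hw', slope_def_field, Phi_zero k hk H h0 x hx0, sub_zero]
    rw [ContinuousAt, hg0, ← nhdsNE_sup_pure (0:ℂ), tendsto_sup]
    refine ⟨h1, ?_⟩
    rw [tendsto_pure_left]
    intro s hs
    rw [hg0] at *
    exact mem_of_mem_nhds hs
  have hgcontU : ContinuousOn g U := by
    intro s hsU
    by_cases hs : s = 0
    · subst hs; exact hgcont0.continuousWithinAt
    · exact ((hgdiff s ⟨hsU, hs⟩).continuousAt).continuousWithinAt
  -- the rectangle identity
  have hσle : σ ≤ 1 := by linarith
  have hrect : ∀ T : ℝ, 0 < T →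
      ((∫ τ in σ..(1:ℝ), g (τ + (-T:ℝ)*I)) - ∫ τ in σ..(1:ℝ), g (τ + (T:ℝ)*I)) +
        I•(∫ t in (-T:ℝ)..T, g (((1:ℝ):ℂ) + t*I)) -
        I•(∫ t in (-T:ℝ)..T, g ((σ:ℂ) + t*I)) = 0 := by
    intro T hT
    have hsub : ([[σ, (1:ℝ)]] ×ℂ [[-T, T]] : Set ℂ) ⊆ U := by
      rintro s hs
      rw [mem_reProdIm] at hs
      obtain ⟨h1, _⟩ := hs
      rw [uIcc_of_le hσle] at h1
      have hh1 := h1.1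
      have hh2 := h1.2
      exact ⟨by linarith, by linarith⟩
    have hc : ContinuousOn g ([[σ, (1:ℝ)]] ×ℂ [[-T, T]]) := hgcontU.mono hsub
    have hd2 : ∀ s ∈ (Ioo (min σ 1) (max σ 1) ×ℂ Ioo (min (-T) T) (max (-T) T)) \ {0},
        DifferentiableAt ℂ g s := by
      rintro s ⟨hs, hs0⟩
      apply hgdiff
      refine ⟨?_, hs0⟩
      rw [mem_reProdIm] at hs
      have h1 := hs.1
      rw [min_eq_left hσle, max_eq_right hσle] at h1
      exact ⟨by linarith [h1.1], by linarith [h1.2]⟩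
    exact Complex.integral_boundary_rect_eq_zero_of_differentiable_on_off_countable
      g ⟨σ, -T⟩ ⟨1, T⟩ {0} (Set.countable_singleton 0) hc hd2
  -- bound for Phi on the vertical strip
  obtain ⟨B, hB0, hB⟩ : ∃ B : ℝ, 0 ≤ B ∧ ∀ s : ℂ, s.re ∈ Icc σ 1 → ‖Phi k H x s‖ ≤ B := by
    have hne : (Icc (σ + (k:ℝ)/2 + 1) (1 + (k:ℝ)/2 + 1)).Nonempty :=
      nonempty_Icc.mpr (by linarith)
    have hcontΓ : ContinuousOn Real.Gamma (Icc (σ + (k:ℝ)/2 + 1) (1 + (k:ℝ)/2 + 1)) := by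
      intro y hy
      have hypos : 0 < y := by have := hy.1; linarith
      refine (Real.differentiableAt_Gamma ?_).continuousAt.continuousWithinAt
      intro m
      have hm : (0:ℝ) ≤ (m:ℝ) := Nat.cast_nonneg m
      intro hEq
      rw [hEq] at hypos; linarith
    obtain ⟨y0, hy0mem, hy0max⟩ := isCompact_Icc.exists_isMaxOn hne hcontΓ
    have hy0 : ∀ y ∈ Icc (σ + (k:ℝ)/2 + 1) (1 + (k:ℝ)/2 + 1), Real.Gamma y ≤ Real.Gamma y0 :=
      fun y hy => hy0max hy
    have hy0pos : 0 < Real.Gamma y0 := Real.Gamma_pos_of_pos (by have := hy0mem.1; linarith)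
    have hscpos : (0:ℝ) < σ + (k:ℝ)/2 := by linarith
    refine ⟨M^4 * (Real.Gamma y0 / (σ + (k:ℝ)/2))^4 / Real.Gamma ((k:ℝ)/2)^4 * x⁻¹,
      by positivity, ?_⟩
    intro s hsre
    have hc : (0:ℝ) < s.re + (k:ℝ)/2 := by have := hsre.1; linarith
    have hsplit : s + (k:ℂ)/2 = ((s.re + (k:ℝ)/2 : ℝ):ℂ) + s.im * I := by
      apply Complex.ext <;> simp
    have hΓv : ‖Complex.Gamma (s + (k:ℂ)/2)‖ ≤
        Real.Gamma (s.re + (k:ℝ)/2 + 1) / ‖((s.re + (k:ℝ)/2 : ℝ):ℂ) + s.im * I‖ := by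
      rw [hsplit]; exact norm_Gamma_vert hc s.im
    have habsge : σ + (k:ℝ)/2 ≤ ‖((s.re + (k:ℝ)/2 : ℝ):ℂ) + s.im * I‖ := by
      have h1 : |(((s.re + (k:ℝ)/2 : ℝ):ℂ) + s.im * I).re| ≤ _ :=
        Complex.abs_re_le_norm (((s.re + (k:ℝ)/2 : ℝ):ℂ) + s.im * I)
      have h2 : (((s.re + (k:ℝ)/2 : ℝ):ℂ) + s.im * I).re = s.re + (k:ℝ)/2 := by simp
      rw [h2] at h1
      have h3 := le_abs_self (s.re + (k:ℝ)/2)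
      have h4 := hsre.1
      linarith
    have hΓ2 : ‖Complex.Gamma (s + (k:ℂ)/2)‖ ≤ Real.Gamma y0 / (σ + (k:ℝ)/2) := by
      refine hΓv.trans (div_le_div₀ hy0pos.le ?_ hscpos habsge)
      exact hy0 _ ⟨by have := hsre.1; linarith, by have := hsre.2; linarith⟩
    have hxpow : ‖(x:ℂ) ^ (-s)‖ ≤ x⁻¹ := by
      rw [Complex.norm_cpow_eq_rpow_re_of_pos hx0]
      have : (-s).re = -s.re := by simp
      rw [this]
      calc x ^ (-s.re) ≤ x ^ (-1 : ℝ) :=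
            Real.rpow_le_rpow_of_exponent_ge hx0 hx1 (by have := hsre.2; linarith)
        _ = x⁻¹ := Real.rpow_neg_one x
    have hH : ‖H s‖ ≤ M := hM s (by
      rw [abs_lt]; have := hsre.1; have := hsre.2; constructor <;> linarith)
    have hnorm : ‖Phi k H x s‖ = ‖H s‖^4 * (‖Complex.Gamma (s + (k:ℂ)/2)‖^4 /
        Real.Gamma ((k:ℝ)/2)^4) * ‖(x:ℂ) ^ (-s)‖ := by
      simp only [Phi, F]
      rw [norm_mul, norm_mul, norm_pow, norm_div, norm_pow, norm_pow]
      congr 3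
      rw [Gamma_kappa, Complex.norm_real, Real.norm_eq_abs, abs_of_pos hgk]
    rw [hnorm]
    have hle1 : ‖H s‖^4 ≤ M^4 := pow_le_pow_left₀ (norm_nonneg _) hH 4
    have hle2 : ‖Complex.Gamma (s + (k:ℂ)/2)‖^4 ≤ (Real.Gamma y0 / (σ + (k:ℝ)/2))^4 :=
      pow_le_pow_left₀ (norm_nonneg _) hΓ2 4
    calc ‖H s‖^4 * (‖Complex.Gamma (s + (k:ℂ)/2)‖^4 / Real.Gamma ((k:ℝ)/2)^4) * ‖(x:ℂ) ^ (-s)‖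
        ≤ M^4 * ((Real.Gamma y0 / (σ + (k:ℝ)/2))^4 / Real.Gamma ((k:ℝ)/2)^4) * x⁻¹ := by
          apply mul_le_mul _ hxpow (norm_nonneg _) (by positivity)
          exact mul_le_mul hle1 (div_le_div_of_nonneg_right hle2 (by positivity))
            (by positivity) (by positivity)
      _ = M^4 * (Real.Gamma y0 / (σ + (k:ℝ)/2))^4 / Real.Gamma ((k:ℝ)/2)^4 * x⁻¹ := by ring
  -- horizontal integrals vanish as T → ∞
  have hhor : ∀ y : ℝ, 1 ≤ |y| → ‖∫ τ in σ..(1:ℝ), g (τ + y*I)‖ ≤ (B+1)*(1-σ)/|y| := by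
    intro y hy
    have hy0 : (0:ℝ) < |y| := by linarith
    have hbound : ∀ τ ∈ Set.uIoc σ (1:ℝ), ‖g ((τ:ℂ) + y*I)‖ ≤ (B+1)/|y| := by
      intro τ hτ
      rw [Set.uIoc_of_le hσle] at hτ
      have hsim : ((τ:ℂ) + y*I).im = y := by simp
      have hsre : ((τ:ℂ) + y*I).re = τ := by simp
      have hyne : y ≠ 0 := by intro h; rw [h] at hy; norm_num at hy
      have hs0 : (τ:ℂ) + y*I ≠ 0 := by
        intro h; apply hyne
        have := congrArg Complex.im h; simpa [hsim] using this
      rw [hgne _ hs0, norm_div]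
      have h1 : ‖Phi k H x ((τ:ℂ) + y*I) - 1‖ ≤ B + 1 := by
        calc ‖Phi k H x ((τ:ℂ) + y*I) - 1‖ ≤ ‖Phi k H x ((τ:ℂ) + y*I)‖ + ‖(1:ℂ)‖ :=
              norm_sub_le _ _
          _ ≤ B + 1 := by
              rw [norm_one]
              have := hB ((τ:ℂ) + y*I) (by rw [hsre]; exact ⟨hτ.1.le, hτ.2⟩)
              linarith
      have h2 : |y| ≤ ‖(τ:ℂ) + y*I‖ := by
        have := Complex.abs_im_le_norm ((τ:ℂ) + y*I)
        rw [hsim] at this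
        simpa using this
      exact div_le_div₀ (by linarith) h1 hy0 h2
    calc ‖∫ τ in σ..(1:ℝ), g (τ + y*I)‖ ≤ (B+1)/|y| * |1 - σ| :=
          intervalIntegral.norm_integral_le_of_norm_le_const hbound
      _ = (B+1)*(1-σ)/|y| := by
          rw [_root_.abs_of_nonneg (by linarith : (0:ℝ) ≤ 1 - σ)]; ring
  have hlim0 : Tendsto (fun T : ℝ => (B+1)*(1-σ)/T) atTop (𝓝 0) := by
    have := tendsto_inv_atTop_zero.const_mul ((B+1)*(1-σ))
    simp only [mul_zero] at this
    simpa [div_eq_mul_inv] using this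
  have hhor_neg : Tendsto (fun T : ℝ => ∫ τ in σ..(1:ℝ), g (τ + (-T:ℝ)*I)) atTop (𝓝 0) := by
    apply squeeze_zero_norm' _ hlim0
    filter_upwards [eventually_ge_atTop (1:ℝ)] with T hT
    have habs : |(-T : ℝ)| = T := by rw [abs_neg, _root_.abs_of_nonneg (by linarith)]
    have := hhor (-T) (by rw [habs]; exact hT)
    rwa [habs] at this
  have hhor_pos : Tendsto (fun T : ℝ => ∫ τ in σ..(1:ℝ), g (τ + (T:ℝ)*I)) atTop (𝓝 0) := by
    apply squeeze_zero_norm' _ hlim0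
    filter_upwards [eventually_ge_atTop (1:ℝ)] with T hT
    have habs : |(T : ℝ)| = T := _root_.abs_of_nonneg (by linarith)
    have := hhor T (by rw [habs]; exact hT)
    rwa [habs] at this
  -- vertical integrals
  have hGint1 : Integrable (fun t : ℝ => G k H x (((1:ℝ):ℂ) + t*I)) :=
    integrableG k hk H hol M hM hM0 x hx0 (σ := 1) one_ne_zero (by norm_num) (by norm_num)
  have hGintσ : Integrable (fun t : ℝ => G k H x ((σ:ℂ) + t*I)) :=
    integrableG k hk H hol M hM hM0 x hx0 hσne hσ1 hσ2
  have hR : Tendsto (fun T : ℝ => ∫ t in (-T)..T, G k H x (((1:ℝ):ℂ) + t*I)) atTop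
      (𝓝 (∫ t : ℝ, G k H x (((1:ℝ):ℂ) + t*I))) :=
    intervalIntegral_tendsto_integral hGint1 tendsto_neg_atTop_atBot tendsto_id
  have hL : Tendsto (fun T : ℝ => ∫ t in (-T)..T, G k H x ((σ:ℂ) + t*I)) atTop
      (𝓝 (∫ t : ℝ, G k H x ((σ:ℂ) + t*I))) :=
    intervalIntegral_tendsto_integral hGintσ tendsto_neg_atTop_atBot tendsto_id
  have hinv1 : Tendsto (fun T : ℝ => ∫ t in (-T)..T, (((1:ℝ):ℂ) + t*I)⁻¹) atTop
      (𝓝 (Real.pi : ℂ)) := tendsto_inv_line one_pos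
  have hinvσ : Tendsto (fun T : ℝ => ∫ t in (-T)..T, ((σ:ℂ) + t*I)⁻¹) atTop
      (𝓝 (-(Real.pi : ℂ))) := tendsto_inv_line_neg hσ0
  have hsplitv : ∀ (σ' : ℝ), σ' ≠ 0 → -1 < σ' → σ' < 2 → ∀ T : ℝ,
      (∫ t in (-T)..T, g ((σ':ℂ) + t*I)) =
        (∫ t in (-T)..T, G k H x ((σ':ℂ) + t*I)) - ∫ t in (-T)..T, ((σ':ℂ) + t*I)⁻¹ := by
    intro σ' h0' h1' h2' T
    have hlin : Continuous fun t : ℝ => (σ':ℂ) + t*I :=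
      continuous_const.add (Complex.continuous_ofReal.mul continuous_const)
    have hcinv : Continuous fun t : ℝ => ((σ':ℂ) + t*I)⁻¹ :=
      Continuous.inv₀ hlin (line_ne_zero h0')
    rw [← intervalIntegral.integral_sub
      ((contG k hk H hol x hx0 h0' h1' h2').intervalIntegrable _ _)
      (hcinv.intervalIntegrable _ _)]
    apply intervalIntegral.integral_congr
    intro t _
    exact hgG _ (line_ne_zero h0' t)
  have hRg : Tendsto (fun T : ℝ => ∫ t in (-T)..T, g (((1:ℝ):ℂ) + t*I)) atTop
      (𝓝 ((∫ t : ℝ, G k H x (((1:ℝ):ℂ) + t*I)) - Real.pi)) := by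
    apply (hR.sub hinv1).congr
    intro T
    exact (hsplitv 1 one_ne_zero (by norm_num) (by norm_num) T).symm
  have hLg : Tendsto (fun T : ℝ => ∫ t in (-T)..T, g ((σ:ℂ) + t*I)) atTop
      (𝓝 ((∫ t : ℝ, G k H x ((σ:ℂ) + t*I)) - -(Real.pi:ℂ))) := by
    apply (hL.sub hinvσ).congr
    intro T
    exact (hsplitv σ hσne hσ1 hσ2 T).symm
  have htot : Tendsto (fun T : ℝ =>
      ((∫ τ in σ..(1:ℝ), g (τ + (-T:ℝ)*I)) - ∫ τ in σ..(1:ℝ), g (τ + (T:ℝ)*I)) +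
        I•(∫ t in (-T:ℝ)..T, g (((1:ℝ):ℂ) + t*I)) -
        I•(∫ t in (-T:ℝ)..T, g ((σ:ℂ) + t*I))) atTop
      (𝓝 (((0:ℂ) - 0) + I•((∫ t : ℝ, G k H x (((1:ℝ):ℂ) + t*I)) - Real.pi) -
        I•((∫ t : ℝ, G k H x ((σ:ℂ) + t*I)) - -(Real.pi:ℂ)))) :=
    ((hhor_neg.sub hhor_pos).add (hRg.const_smul I)).sub (hLg.const_smul I)
  have hzero : Tendsto (fun T : ℝ =>
      ((∫ τ in σ..(1:ℝ), g (τ + (-T:ℝ)*I)) - ∫ τ in σ..(1:ℝ), g (τ + (T:ℝ)*I)) +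
        I•(∫ t in (-T:ℝ)..T, g (((1:ℝ):ℂ) + t*I)) -
        I•(∫ t in (-T:ℝ)..T, g ((σ:ℂ) + t*I))) atTop (𝓝 0) := by
    apply Tendsto.congr' _ (tendsto_const_nhds (x := (0:ℂ)))
    filter_upwards [eventually_gt_atTop (0:ℝ)] with T hT
    exact (hrect T hT).symm
  have heqv := tendsto_nhds_unique htot hzero
  have h3 : I * ((∫ t : ℝ, G k H x (((1:ℝ):ℂ) + t*I)) -
      ((∫ t : ℝ, G k H x ((σ:ℂ) + t*I)) + 2*(Real.pi:ℂ))) = 0 := by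
    simp only [smul_eq_mul] at heqv
    linear_combination heqv
  rcases mul_eq_zero.mp h3 with h | h
  · exact absurd h I_ne_zero
  · linear_combination h

end Vnear
end

section
open Complex MeasureTheory

/-- Let `k ≥ 3` and let `H` be holomorphic and bounded on `|Re s| < 3`, even, with
`H 0 = 1`.  Define `𝒱(ξ) = (1/2πi) ∫_{Re s = 1} H(s)⁴ Γ(s + k/2)⁴/Γ(k/2)⁴ ξ^{-s} ds/s`.
Then for every `0 < A < 1` there is `C > 0` with `|𝒱(x) - 1| ≤ C x^A` for all
`0 < x ≤ 1`. -/
theorem V_near_one (k : ℕ) (hk : 3 ≤ k) (H : ℂ → ℂ)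
    (hol : DifferentiableOn ℂ H {s : ℂ | |s.re| < 3})
    (bdd : ∃ M : ℝ, ∀ s : ℂ, |s.re| < 3 → ‖H s‖ ≤ M)
    (heven : ∀ s : ℂ, H (-s) = H s)
    (h0 : H 0 = 1)
    (V : ℝ → ℂ)
    (hV : ∀ x : ℝ, 0 < x → V x =
      (1 / (2 * Real.pi * Complex.I)) *
        ∫ t : ℝ, (H (1 + t * Complex.I)) ^ 4 *
          ((Complex.Gamma ((1 + t * Complex.I) + (k : ℂ) / 2)) ^ 4 /
            (Complex.Gamma ((k : ℂ) / 2)) ^ 4) *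
          (x : ℂ) ^ (-(1 + t * Complex.I)) / (1 + t * Complex.I) * Complex.I) :
    ∀ A : ℝ, 0 < A → A < 1 → ∃ C : ℝ, 0 < C ∧
      ∀ x : ℝ, 0 < x → x ≤ 1 → ‖V x - 1‖ ≤ C * x ^ A := by
  intro A hA0 hA1
  obtain ⟨M₀, hM₀⟩ := bdd
  set M : ℝ := max M₀ 1 with hMdef
  have hM : ∀ s : ℂ, |s.re| < 3 → ‖H s‖ ≤ M := fun s hs => (hM₀ s hs).trans (le_max_left _ _)
  have hM1 : (1:ℝ) ≤ M := le_max_right _ _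
  have hM0 : (0:ℝ) ≤ M := by linarith
  have h32 := Vnear.kappa_half_le k hk
  have hgk := Vnear.gk_pos k hk
  have hcA : (0:ℝ) < -A + (k:ℝ)/2 := by linarith
  have hmin : (0:ℝ) < min 1 (-A + (k:ℝ)/2) := lt_min one_pos hcA
  have hΓcA : (0:ℝ) < Real.Gamma (-A + (k:ℝ)/2 + 1) := Real.Gamma_pos_of_pos (by linarith)
  set D : ℝ := M^4 * Real.Gamma (-A + (k:ℝ)/2 + 1)^4 / Real.Gamma ((k:ℝ)/2)^4 /
      (|(-A : ℝ)| * (min 1 (-A + (k:ℝ)/2))^4) with hDdef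
  have hD : 0 < D := by
    apply div_pos (div_pos (mul_pos (by positivity) (pow_pos hΓcA 4)) (pow_pos hgk 4))
    exact mul_pos (abs_pos.mpr (by linarith)) (pow_pos hmin 4)
  refine ⟨D/2 + 1, by linarith, ?_⟩
  intro x hx0 hx1
  -- rewrite V x in terms of G
  have hVG : V x = (1 / (2 * (Real.pi:ℂ) * I)) *
      ((∫ t : ℝ, Vnear.G k H x (((1:ℝ):ℂ) + t*I)) * I) := by
    rw [hV x hx0]
    congr 1
    have hfun : (fun t : ℝ => (H (1 + t * I)) ^ 4 *
        ((Complex.Gamma ((1 + t * I) + (k : ℂ) / 2)) ^ 4 /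
          (Complex.Gamma ((k : ℂ) / 2)) ^ 4) *
        (x : ℝ) ^ (-(1 + t * I)) / (1 + t * I) * I) =
        fun t : ℝ => Vnear.G k H x (((1:ℝ):ℂ) + t*I) * I := by
      funext t
      simp only [Vnear.G, Vnear.Phi, Vnear.F, Complex.ofReal_one]
    rw [hfun, integral_mul_const]
  have hshift := Vnear.contour_shift k hk H hol M hM h0 x hx0 hx1
    (σ := -A) (by linarith) (by linarith)
  set JA : ℂ := ∫ t : ℝ, Vnear.G k H x (((-A : ℝ):ℂ) + t*I) with hJAdef
  have hπ : (Real.pi : ℂ) ≠ 0 := Complex.ofReal_ne_zero.mpr Real.pi_ne_zero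
  have hVsimp : V x - 1 = JA / (2*(Real.pi:ℂ)) := by
    rw [hVG, hshift]
    field_simp
    ring
  -- bound
  have hbound : ∀ t : ℝ, ‖Vnear.G k H x (((-A : ℝ):ℂ) + t*I)‖ ≤ (D * x ^ A) * (1+t^2)⁻¹ := by
    intro t
    have := Vnear.normG_bound k hk H M hM hM0 x hx0 (σ := -A)
      (by linarith) (by linarith) (by linarith) t
    rw [neg_neg] at this
    calc ‖Vnear.G k H x (((-A : ℝ):ℂ) + t*I)‖ ≤
        (M^4 * Real.Gamma (-A + (k:ℝ)/2 + 1)^4 / Real.Gamma ((k:ℝ)/2)^4 /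
          (|(-A : ℝ)| * (min 1 (-A + (k:ℝ)/2))^4)) * x ^ A * (1+t^2)⁻¹ := this
      _ = (D * x ^ A) * (1+t^2)⁻¹ := by ring
  have hxA : (0:ℝ) < x ^ A := Real.rpow_pos_of_pos hx0 A
  have hJA : ‖JA‖ ≤ D * x ^ A * Real.pi := by
    calc ‖JA‖ ≤ ∫ t : ℝ, (D * x ^ A) * (1+t^2)⁻¹ := by
          apply norm_integral_le_of_norm_le (integrable_inv_one_add_sq.const_mul _)
          exact Filter.Eventually.of_forall hbound
      _ = (D * x ^ A) * ∫ t : ℝ, (1+t^2)⁻¹ := integral_const_mul _ _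
      _ = D * x ^ A * Real.pi := by rw [integral_univ_inv_one_add_sq]
  have hnorm2pi : ‖(2*(Real.pi:ℂ))‖ = 2*Real.pi := by
    rw [norm_mul]
    simp [_root_.abs_of_nonneg Real.pi_pos.le]
  rw [hVsimp, norm_div, hnorm2pi]
  rw [div_le_iff₀ (by positivity : (0:ℝ) < 2*Real.pi)]
  calc ‖JA‖ ≤ D * x ^ A * Real.pi := hJA
    _ ≤ (D/2 + 1) * x ^ A * (2*Real.pi) := by nlinarith [Real.pi_pos]

end
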